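/- Let X and Y be random variables on a probability space with 0 ≤ Y ≤ X almost surely and X > 0 almost surely, and let c ∈ [0,∞). If lim_{λ↓0} E[ (Y/X)(1 − e^{−λX}) ] / ( λ log(1/λ) ) = c, then lim_{λ↓0} E[ Y e^{−λX} ] / log(1/λ) = c. (All expectations here are finite for λ ∈ (0, e^{−1}): indeed (Y/X)(1 − e^{−λX}) ≤ λ ∧ 1 and Y e^{−λX} ≤ X e^{−λX} ≤ (eλ)^{−1}.) -/

import Mathlib

open MeasureTheory Filter Topology

private lemma aux_texp (t : ℝ) :
    t * Real.exp (-t) ≤ 1 - Real.exp (-t) := by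
  have h1 := Real.add_one_le_exp t
  have h2 := mul_le_mul_of_nonneg_left h1 (Real.exp_pos (-t)).le
  have h3 : Real.exp (-t) * Real.exp t = 1 := by rw [← Real.exp_add]; simp
  nlinarith

private lemma aux_one_sub (u : ℝ) : 1 - Real.exp (-u) ≤ u := by
  linarith [Real.add_one_le_exp (-u)]

private lemma aux_le_one (t : ℝ) : t * Real.exp (-t) ≤ 1 := by
  have := aux_texp t
  have := (Real.exp_pos (-t)).le
  linarith

/-- **Tauberian step for the Laplace-transform asymptotics**: if `0 ≤ Y ≤ X` a.s. and
`X > 0` a.s., and `E[(Y/X)(1 − e^{−λX})]/(λ log(1/λ)) → c` as `λ ↓ 0`, then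
`E[Y e^{−λX}]/log(1/λ) → c` as `λ ↓ 0`. -/
theorem laplace_tauberian_step
    {Ω : Type*} [MeasurableSpace Ω] (P : Measure Ω) [IsProbabilityMeasure P]
    (X Y : Ω → ℝ) (hXmeas : Measurable X) (hYmeas : Measurable Y)
    (hYX : ∀ᵐ ω ∂P, 0 ≤ Y ω ∧ Y ω ≤ X ω)
    (hXpos : ∀ᵐ ω ∂P, 0 < X ω)
    (c : ℝ) (hc : 0 ≤ c)
    (hyp : Tendsto (fun l : ℝ =>
        (∫ ω, (Y ω / X ω) * (1 - Real.exp (-(l * X ω))) ∂P) / (l * Real.log (1 / l)))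
      (𝓝[>] 0) (𝓝 c)) :
    Tendsto (fun l : ℝ =>
        (∫ ω, Y ω * Real.exp (-(l * X ω)) ∂P) / Real.log (1 / l))
      (𝓝[>] 0) (𝓝 c) := by
  set f : ℝ → ℝ := fun l => ∫ ω, (Y ω / X ω) * (1 - Real.exp (-(l * X ω))) ∂P with hf
  set g : ℝ → ℝ := fun l => ∫ ω, Y ω * Real.exp (-(l * X ω)) ∂P with hg
  -- measurability
  have hmg : ∀ l : ℝ, AEStronglyMeasurable (fun ω => Y ω * Real.exp (-(l * X ω))) P :=
    fun l => (hYmeas.mul ((measurable_const.mul hXmeas).neg.exp)).aestronglyMeasurable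
  have hmf : ∀ l : ℝ,
      AEStronglyMeasurable (fun ω => (Y ω / X ω) * (1 - Real.exp (-(l * X ω)))) P :=
    fun l => ((hYmeas.div hXmeas).mul
      (measurable_const.sub (measurable_const.mul hXmeas).neg.exp)).aestronglyMeasurable
  -- integrability
  have hintg : ∀ l : ℝ, 0 < l → Integrable (fun ω => Y ω * Real.exp (-(l * X ω))) P := by
    intro l hl
    refine Integrable.mono' (integrable_const (1/l)) (hmg l) ?_
    filter_upwards [hYX, hXpos] with ω hYω hX
    obtain ⟨hY0, hYle⟩ := hYω
    rw [Real.norm_eq_abs, abs_of_nonneg (mul_nonneg hY0 (Real.exp_pos _).le)]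
    have h3 : (l * X ω) * Real.exp (-(l * X ω)) ≤ 1 := aux_le_one _
    have h4 : Y ω * Real.exp (-(l * X ω)) ≤ X ω * Real.exp (-(l * X ω)) :=
      mul_le_mul_of_nonneg_right hYle (Real.exp_pos _).le
    calc Y ω * Real.exp (-(l * X ω)) ≤ X ω * Real.exp (-(l * X ω)) := h4
      _ ≤ 1 / l := by rw [le_div_iff₀ hl]; nlinarith
  have hintf : ∀ l : ℝ, 0 ≤ l →
      Integrable (fun ω => (Y ω / X ω) * (1 - Real.exp (-(l * X ω)))) P := by
    intro l hl
    refine Integrable.mono' (integrable_const 1) (hmf l) ?_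
    filter_upwards [hYX, hXpos] with ω hYω hX
    obtain ⟨hY0, hYle⟩ := hYω
    have hq : 0 ≤ Y ω / X ω := div_nonneg hY0 hX.le
    have hq1 : Y ω / X ω ≤ 1 := (div_le_one hX).2 hYle
    have he : Real.exp (-(l * X ω)) ≤ 1 := by
      calc Real.exp (-(l * X ω)) ≤ Real.exp 0 :=
            Real.exp_le_exp.2 (by nlinarith [hX.le])
        _ = 1 := Real.exp_zero
    have hep := (Real.exp_pos (-(l * X ω))).le
    rw [Real.norm_eq_abs, abs_of_nonneg (mul_nonneg hq (by linarith))]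
    nlinarith
  -- key inequality 1 : l * g l ≤ f l
  have ineq1 : ∀ l : ℝ, 0 < l → l * g l ≤ f l := by
    intro l hl
    have h : ∫ ω, l * (Y ω * Real.exp (-(l * X ω))) ∂P ≤ f l := by
      refine integral_mono_ae ((hintg l hl).const_mul l) (hintf l hl.le) ?_
      filter_upwards [hYX, hXpos] with ω hYω hX
      obtain ⟨hY0, hYle⟩ := hYω
      have hq : 0 ≤ Y ω / X ω := div_nonneg hY0 hX.le
      have hA := aux_texp (l * X ω)
      calc l * (Y ω * Real.exp (-(l * X ω)))
          = (Y ω / X ω) * ((l * X ω) * Real.exp (-(l * X ω))) := by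
            field_simp
        _ ≤ (Y ω / X ω) * (1 - Real.exp (-(l * X ω))) :=
            mul_le_mul_of_nonneg_left hA hq
    rwa [integral_const_mul] at h
  -- key inequality 2 : f (2l) - f l ≤ l * g l
  have ineq2 : ∀ l : ℝ, 0 < l → f (2*l) - f l ≤ l * g l := by
    intro l hl
    have hsub : f (2*l) - f l = ∫ ω, ((Y ω / X ω) * (1 - Real.exp (-(2*l * X ω)))
        - (Y ω / X ω) * (1 - Real.exp (-(l * X ω)))) ∂P :=
      (integral_sub (hintf (2*l) (by positivity)) (hintf l hl.le)).symm
    rw [hsub, show l * g l = ∫ ω, l * (Y ω * Real.exp (-(l * X ω))) ∂P from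
      (integral_const_mul l _).symm]
    refine integral_mono_ae ((hintf (2*l) (by positivity)).sub (hintf l hl.le))
      ((hintg l hl).const_mul l) ?_
    filter_upwards [hYX, hXpos] with ω hYω hX
    obtain ⟨hY0, hYle⟩ := hYω
    have hq : 0 ≤ Y ω / X ω := div_nonneg hY0 hX.le
    have he2 : Real.exp (-(2*l * X ω)) = Real.exp (-(l * X ω)) * Real.exp (-(l * X ω)) := by
      rw [← Real.exp_add]; congr 1; ring
    have hB : 1 - Real.exp (-(l * X ω)) ≤ l * X ω := aux_one_sub _
    have hqe : 0 ≤ (Y ω / X ω) * Real.exp (-(l * X ω)) :=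
      mul_nonneg hq (Real.exp_pos _).le
    have hint := mul_le_mul_of_nonneg_left hB hqe
    have hYe : l * (Y ω * Real.exp (-(l * X ω)))
        = (Y ω / X ω) * Real.exp (-(l * X ω)) * (l * X ω) := by
      field_simp
    rw [he2]
    nlinarith [hint, hYe]
  -- map l ↦ 2l
  have hmap2 : Tendsto (fun l : ℝ => 2*l) (𝓝[>] (0:ℝ)) (𝓝[>] (0:ℝ)) := by
    apply tendsto_nhdsWithin_of_tendsto_nhds_of_eventually_within
    · simpa using ((tendsto_id (x := 𝓝 (0:ℝ))).const_mul 2).mono_left nhdsWithin_le_nhds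
    · filter_upwards [self_mem_nhdsWithin] with l hl
      exact mul_pos two_pos (Set.mem_Ioi.mp hl)
  have hcomp : Tendsto (fun l : ℝ => f (2*l) / (2*l * Real.log (1/(2*l)))) (𝓝[>] 0) (𝓝 c) :=
    hyp.comp hmap2
  -- log(1/l) → ∞
  have hLtop : Tendsto (fun l : ℝ => Real.log (1/l)) (𝓝[>] (0:ℝ)) atTop := by
    have h := Real.tendsto_log_atTop.comp tendsto_inv_nhdsGT_zero
    exact h.congr (fun l => by simp [Function.comp, one_div])
  -- ratio of logs → 1
  have hratio : Tendsto (fun l : ℝ => Real.log (1/(2*l)) / Real.log (1/l))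
      (𝓝[>] (0:ℝ)) (𝓝 1) := by
    have h0 : Tendsto (fun l : ℝ => 1 - Real.log 2 / Real.log (1/l)) (𝓝[>] (0:ℝ)) (𝓝 1) := by
      have h1 := (tendsto_const_nhds (x := Real.log 2) (f := 𝓝[>] (0:ℝ))).div_atTop hLtop
      simpa using (tendsto_const_nhds (x := (1:ℝ)) (f := 𝓝[>] (0:ℝ))).sub h1
    refine h0.congr' ?_
    filter_upwards [Ioo_mem_nhdsGT_of_mem (by norm_num : (0:ℝ) ∈ Set.Ico 0 1)] with l hl
    obtain ⟨hl0, hl1⟩ := hl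
    have hlog : Real.log l < 0 := Real.log_neg hl0 hl1
    rw [one_div, one_div, Real.log_inv, Real.log_inv, Real.log_mul two_ne_zero hl0.ne']
    field_simp [hlog.ne]
    ring
  -- lower bound function tends to c
  have tendsto_low : Tendsto (fun l : ℝ =>
      2 * (f (2*l) / (2*l * Real.log (1/(2*l)))) * (Real.log (1/(2*l)) / Real.log (1/l))
        - f l / (l * Real.log (1/l))) (𝓝[>] (0:ℝ)) (𝓝 c) := by
    have := ((hcomp.const_mul 2).mul hratio).sub hyp
    have hcc : 2 * c * 1 - c = c := by ring
    rwa [hcc] at this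
  -- squeeze
  refine tendsto_of_tendsto_of_tendsto_of_le_of_le' tendsto_low hyp ?_ ?_
  · filter_upwards [Ioo_mem_nhdsGT_of_mem (by norm_num : (0:ℝ) ∈ Set.Ico 0 (1/2))] with l hl
    obtain ⟨hl0, hl2⟩ := hl
    have hL : 0 < Real.log (1/l) := Real.log_pos ((one_lt_div hl0).2 (by linarith))
    have hL2 : 0 < Real.log (1/(2*l)) :=
      Real.log_pos ((one_lt_div (by positivity)).2 (by linarith))
    have hid : 2 * (f (2*l) / (2*l * Real.log (1/(2*l)))) * (Real.log (1/(2*l)) / Real.log (1/l))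
        = f (2*l) / (l * Real.log (1/l)) := by
      field_simp
    rw [hid, div_sub_div_same, div_le_div_iff₀ (by positivity) hL]
    nlinarith [mul_le_mul_of_nonneg_right (ineq2 l hl0) hL.le]
  · filter_upwards [Ioo_mem_nhdsGT_of_mem (by norm_num : (0:ℝ) ∈ Set.Ico 0 (1/2))] with l hl
    obtain ⟨hl0, hl2⟩ := hl
    have hL : 0 < Real.log (1/l) := Real.log_pos ((one_lt_div hl0).2 (by linarith))
    rw [div_le_div_iff₀ hL (by positivity)]
    nlinarith [mul_le_mul_of_nonneg_right (ineq1 l hl0) hL.le]
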